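/- arXiv:1601.05292 — 7 statements merged into one kernel-verified Lean document; each statement's English description precedes it below -/
import Mathlib

section
/- For every m ≥ 3, the Laurent polynomial V m is nonzero and maxdeg (V m) = 5m - 6. (Equivalently, in the variable t = z², deg V(L_m) = 5(m-3) + 9 half-integer steps, and deg V(L_m) = deg V(L_{m-1}) + 5.) -/
open LaurentPolynomial

noncomputable def U : LaurentPolynomial ℤ := -T 1 - T (-1)

noncomputable def Q3 : LaurentPolynomial ℤ :=
  T 9 - 2 * T 7 + T 5 - 2 * T 3 - 2 * T 1 - 2 * T (-1) - 2 * T (-3) + T (-5)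
    - 2 * T (-7) + T (-9)

/-- The maximum exponent in the support of a Laurent polynomial. -/
noncomputable def maxdeg (p : LaurentPolynomial ℤ) : WithBot ℤ := p.coeff.support.max

/-- The minimum exponent in the support of a Laurent polynomial. -/
noncomputable def mindeg (p : LaurentPolynomial ℤ) : WithTop ℤ := p.coeff.support.min

section Aux

open AddMonoidAlgebra

noncomputable abbrev Dc : ℤ → WithBot ℤ := fun n => (n : WithBot ℤ)

lemma hDadd : ∀ a b : ℤ, Dc (a + b) = Dc a + Dc b := fun _ _ => WithBot.coe_add _ _

lemma maxdeg_eq_supDegree (p : LaurentPolynomial ℤ) : maxdeg p = supDegree Dc p := rfl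

lemma sd_T (n : ℤ) : supDegree Dc (T n : LaurentPolynomial ℤ) = (n : WithBot ℤ) :=
  supDegree_single_ne_zero n one_ne_zero

lemma cT (c n : ℤ) : ((c : LaurentPolynomial ℤ) * T n) = AddMonoidAlgebra.single n c := by
  rw [single_eq_C_mul_T]; norm_cast

lemma sd_le_cT {c n b : ℤ} (h : n ≤ b) :
    supDegree Dc ((c : LaurentPolynomial ℤ) * T n) ≤ (b : WithBot ℤ) := by
  rw [cT, supDegree_single]
  split_ifs
  · exact bot_le
  · exact_mod_cast h

lemma sd_le_T {n b : ℤ} (h : n ≤ b) :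
    supDegree Dc (T n : LaurentPolynomial ℤ) ≤ (b : WithBot ℤ) := by
  rw [sd_T]; exact_mod_cast h

/-- Multiplying by `T n` shifts the top degree by `n`. -/
lemma sd_mul_T (p : LaurentPolynomial ℤ) (n : ℤ) :
    supDegree Dc (p * T n) = supDegree Dc p + (n : WithBot ℤ) := by
  have hsupp : (p * T n).coeff.support = p.coeff.support.map (addRightEmbedding n) := by
    have := AddMonoidAlgebra.support_coeff_mul_single (G := ℤ) p (1 : ℤ)
      (fun y => by simp) n
    simpa using this
  have hmono : Monotone (fun x : WithBot ℤ => x + (n : WithBot ℤ)) :=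
    fun a b hab => add_le_add_left hab _
  calc supDegree Dc (p * T n) = (p.coeff.support.map (addRightEmbedding n)).sup Dc := by
        rw [supDegree, hsupp]
    _ = p.coeff.support.sup (fun a => Dc a + (n : WithBot ℤ)) := by
        rw [Finset.sup_map]
        refine Finset.sup_congr rfl (fun a _ => ?_)
        simp [addRightEmbedding, WithBot.coe_add]
    _ = p.coeff.support.sup Dc + (n : WithBot ℤ) := by
        refine (Finset.comp_sup_eq_sup_comp (fun x : WithBot ℤ => x + (n : WithBot ℤ))
          (fun x y => hmono.map_max) ?_).symm
        simp


lemma sd_U_le : supDegree Dc U ≤ ((1 : ℤ) : WithBot ℤ) := by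
  have : U = -(T 1) - T (-1) := by rw [U]
  rw [this]
  refine supDegree_sub_le.trans (sup_le ?_ ?_)
  · rw [supDegree_neg]; exact sd_le_T le_rfl
  · exact sd_le_T (by norm_num)

lemma sd_U_pow_le (k : ℕ) : supDegree Dc (U ^ k) ≤ ((k : ℤ) : WithBot ℤ) := by
  induction k with
  | zero =>
      rw [pow_zero, one_def, supDegree_single]
      split_ifs
      · exact bot_le
      · norm_num
  | succ k ih =>
      rw [pow_succ]
      refine (supDegree_mul_le hDadd).trans ?_
      calc supDegree Dc (U ^ k) + supDegree Dc U
          ≤ ((k : ℤ) : WithBot ℤ) + ((1 : ℤ) : WithBot ℤ) := add_le_add ih sd_U_le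
        _ = (((k + 1 : ℕ) : ℤ) : WithBot ℤ) := by rw [← WithBot.coe_add]; norm_cast

lemma sd_W_le :
    supDegree Dc (T 4 - 2 * T 2 + 3 - 2 * T (-2) + T (-4) : LaurentPolynomial ℤ)
      ≤ ((4 : ℤ) : WithBot ℤ) := by
  have h3 : (3 : LaurentPolynomial ℤ) = ((3 : ℤ) : LaurentPolynomial ℤ) * T 0 := by
    rw [T_zero, mul_one]; norm_num
  have h2 : (2 : LaurentPolynomial ℤ) = ((2 : ℤ) : LaurentPolynomial ℤ) := by norm_num
  rw [h3, h2]
  refine supDegree_add_le.trans (sup_le ?_ (sd_le_T (by norm_num)))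
  refine supDegree_sub_le.trans (sup_le ?_ (sd_le_cT (by norm_num)))
  refine supDegree_add_le.trans (sup_le ?_ (sd_le_cT (by norm_num)))
  exact supDegree_sub_le.trans (sup_le (sd_le_T (by norm_num)) (sd_le_cT (by norm_num)))

lemma sd_Q3 : supDegree Dc Q3 = ((9 : ℤ) : WithBot ℤ) := by
  have h2 : (2 : LaurentPolynomial ℤ) = ((2 : ℤ) : LaurentPolynomial ℤ) := by norm_num
  have hd : Q3 = T 9 +
      (-(((2 : ℤ) : LaurentPolynomial ℤ) * T 7) + T 5
        - ((2 : ℤ) : LaurentPolynomial ℤ) * T 3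
        - ((2 : ℤ) : LaurentPolynomial ℤ) * T 1
        - ((2 : ℤ) : LaurentPolynomial ℤ) * T (-1)
        - ((2 : ℤ) : LaurentPolynomial ℤ) * T (-3) + T (-5)
        - ((2 : ℤ) : LaurentPolynomial ℤ) * T (-7) + T (-9)) := by
    rw [Q3, ← h2]; ring
  have hr : supDegree Dc (-(((2 : ℤ) : LaurentPolynomial ℤ) * T 7) + T 5
        - ((2 : ℤ) : LaurentPolynomial ℤ) * T 3
        - ((2 : ℤ) : LaurentPolynomial ℤ) * T 1
        - ((2 : ℤ) : LaurentPolynomial ℤ) * T (-1)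
        - ((2 : ℤ) : LaurentPolynomial ℤ) * T (-3) + T (-5)
        - ((2 : ℤ) : LaurentPolynomial ℤ) * T (-7) + T (-9))
      ≤ ((7 : ℤ) : WithBot ℤ) := by
    refine supDegree_add_le.trans (sup_le ?_ (sd_le_T (by norm_num)))
    refine supDegree_sub_le.trans (sup_le ?_ (sd_le_cT (by norm_num)))
    refine supDegree_add_le.trans (sup_le ?_ (sd_le_T (by norm_num)))
    refine supDegree_sub_le.trans (sup_le ?_ (sd_le_cT (by norm_num)))
    refine supDegree_sub_le.trans (sup_le ?_ (sd_le_cT (by norm_num)))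
    refine supDegree_sub_le.trans (sup_le ?_ (sd_le_cT (by norm_num)))
    refine supDegree_sub_le.trans (sup_le ?_ (sd_le_cT (by norm_num)))
    refine supDegree_add_le.trans (sup_le ?_ (sd_le_T (by norm_num)))
    rw [supDegree_neg]; exact sd_le_cT le_rfl
  have hlt : supDegree Dc (-(((2 : ℤ) : LaurentPolynomial ℤ) * T 7) + T 5
        - ((2 : ℤ) : LaurentPolynomial ℤ) * T 3
        - ((2 : ℤ) : LaurentPolynomial ℤ) * T 1
        - ((2 : ℤ) : LaurentPolynomial ℤ) * T (-1)
        - ((2 : ℤ) : LaurentPolynomial ℤ) * T (-3) + T (-5)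
        - ((2 : ℤ) : LaurentPolynomial ℤ) * T (-7) + T (-9))
      < supDegree Dc (T 9 : LaurentPolynomial ℤ) := by
    rw [sd_T]; exact hr.trans_lt (by exact_mod_cast (by norm_num : (7:ℤ) < 9))
  rw [hd, supDegree_add_eq_left hlt, sd_T]

end Aux

/-- For every `m ≥ 3`, `V m` is nonzero and has top degree `5 * m - 6` in `z`. -/
theorem maxdeg_V (V : ℕ → LaurentPolynomial ℤ) (hV3 : V 3 = Q3)
    (hVrec : ∀ m : ℕ, 3 ≤ m → V (m + 1) =
      V m * (T 5 - T 3 - T (-3) + T (-5)) +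
        U ^ (m + 1) * (T 4 - 2 * T 2 + 3 - 2 * T (-2) + T (-4))) :
    ∀ m : ℕ, 3 ≤ m → V m ≠ 0 ∧ maxdeg (V m) = ((5 * (m : ℤ) - 6 : ℤ) : WithBot ℤ) := by
  open AddMonoidAlgebra in
  intro m hm
  induction m, hm using Nat.le_induction with
  | base =>
      rw [hV3, maxdeg_eq_supDegree, sd_Q3]
      refine ⟨ne_zero_of_supDegree_ne_bot (D := Dc) ?_, by norm_num⟩
      rw [sd_Q3]; exact WithBot.coe_ne_bot
  | succ m hm ih =>
      obtain ⟨hne, hdeg⟩ := ih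
      rw [maxdeg_eq_supDegree] at hdeg
      have hshift : ∀ n : ℤ, supDegree Dc (V m * T n)
          = ((5 * (m : ℤ) - 6 + n : ℤ) : WithBot ℤ) := by
        intro n
        rw [sd_mul_T, hdeg, ← WithBot.coe_add]
      have hVM : supDegree Dc (V m * (T 5 - T 3 - T (-3) + T (-5)))
          = ((5 * (m : ℤ) - 1 : ℤ) : WithBot ℤ) := by
        have hd : V m * (T 5 - T 3 - T (-3) + T (-5))
            = V m * T 5 + (-(V m * T 3) - V m * T (-3) + V m * T (-5)) := by ring
        have hr : supDegree Dc (-(V m * T 3) - V m * T (-3) + V m * T (-5))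
            ≤ ((5 * (m : ℤ) - 3 : ℤ) : WithBot ℤ) := by
          refine supDegree_add_le.trans (sup_le ?_ ?_)
          · refine supDegree_sub_le.trans (sup_le ?_ ?_)
            · rw [supDegree_neg, hshift]
              exact_mod_cast (by omega : (5 * (m : ℤ) - 6 + 3 : ℤ) ≤ 5 * (m : ℤ) - 3)
            · rw [hshift]
              exact_mod_cast (by omega : (5 * (m : ℤ) - 6 + (-3) : ℤ) ≤ 5 * (m : ℤ) - 3)
          · rw [hshift]
            exact_mod_cast (by omega : (5 * (m : ℤ) - 6 + (-5) : ℤ) ≤ 5 * (m : ℤ) - 3)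
        have hlt : supDegree Dc (-(V m * T 3) - V m * T (-3) + V m * T (-5))
            < supDegree Dc (V m * T 5) := by
          rw [hshift]
          exact hr.trans_lt
            (by exact_mod_cast (by omega : (5 * (m : ℤ) - 3 : ℤ) < 5 * (m : ℤ) - 6 + 5))
        rw [hd, supDegree_add_eq_left hlt, hshift]
        congr 1; ring
      have hE : supDegree Dc (U ^ (m + 1) * (T 4 - 2 * T 2 + 3 - 2 * T (-2) + T (-4)))
          ≤ (((m : ℤ) + 5 : ℤ) : WithBot ℤ) := by
        refine (supDegree_mul_le hDadd).trans ?_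
        calc supDegree Dc (U ^ (m + 1)) + supDegree Dc (T 4 - 2 * T 2 + 3 - 2 * T (-2) + T (-4))
            ≤ (((m + 1 : ℕ) : ℤ) : WithBot ℤ) + ((4 : ℤ) : WithBot ℤ) :=
              add_le_add (sd_U_pow_le (m + 1)) sd_W_le
          _ = (((m : ℤ) + 5 : ℤ) : WithBot ℤ) := by
              rw [← WithBot.coe_add]; norm_cast
      have hlt : supDegree Dc (U ^ (m + 1) * (T 4 - 2 * T 2 + 3 - 2 * T (-2) + T (-4)))
          < supDegree Dc (V m * (T 5 - T 3 - T (-3) + T (-5))) := by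
        rw [hVM]
        refine hE.trans_lt ?_
        exact_mod_cast (by omega : ((m : ℤ) + 5 : ℤ) < 5 * (m : ℤ) - 1)
      have hsum : supDegree Dc (V (m + 1)) = ((5 * (m : ℤ) - 1 : ℤ) : WithBot ℤ) := by
        rw [hVrec m hm, supDegree_add_eq_left hlt, hVM]
      constructor
      · refine ne_zero_of_supDegree_ne_bot (D := Dc) ?_
        rw [hsum]; exact WithBot.coe_ne_bot
      · rw [maxdeg_eq_supDegree, hsum]
        congr 1
        push_cast
        ring
end

section
/- For every m ≥ 3, maxdeg (V m) > m; consequently V m ≠ U^m, where U := -z - z⁻¹. (Hence for every m ≥ 3, at least one of the links W_n(B_m) and W_{n-2}(B_m) is not link isotopic to the m-component unlink, which proves parts (1)–(3) of the Main Theorem.) -/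
open LaurentPolynomial

namespace VAux

open AddMonoidAlgebra

noncomputable def md (p : LaurentPolynomial ℤ) : WithBot ℤ :=
  p.supDegree (fun n : ℤ => (n : WithBot ℤ))

lemma maxdeg_eq_md (p : LaurentPolynomial ℤ) : maxdeg p = md p := by
  rw [maxdeg, md, supDegree, Finset.max_eq_sup_withBot]

lemma md_T (n : ℤ) : md (T n : LaurentPolynomial ℤ) = (n : WithBot ℤ) :=
  supDegree_single_ne_zero n one_ne_zero

lemma md_add_le' {p q : LaurentPolynomial ℤ} {b : WithBot ℤ} (hp : md p ≤ b) (hq : md q ≤ b) :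
    md (p + q) ≤ b := le_trans supDegree_add_le (sup_le hp hq)

lemma md_neg {p : LaurentPolynomial ℤ} : md (-p) = md p := by
  rw [md, md, supDegree_neg]

lemma md_neg_le {p : LaurentPolynomial ℤ} {b : WithBot ℤ} (hp : md p ≤ b) : md (-p) ≤ b := by
  rw [md_neg]; exact hp

lemma md_T_le {n b : ℤ} (h : n ≤ b) : md (T n : LaurentPolynomial ℤ) ≤ (b : WithBot ℤ) := by
  rw [md_T]; exact_mod_cast h

lemma ne_zero_of_md {p : LaurentPolynomial ℤ} {c : ℤ} (h : md p = (c : WithBot ℤ)) : p ≠ 0 :=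
  ne_zero_of_supDegree_ne_bot (D := fun n : ℤ => (n : WithBot ℤ))
    (by rw [md] at h; rw [h]; exact WithBot.coe_ne_bot)

lemma le_of_mem_support {p : LaurentPolynomial ℤ} {a x : ℤ} (h : md p = (a : WithBot ℤ))
    (hx : x ∈ p.coeff.support) : x ≤ a := by
  have : (x : WithBot ℤ) ≤ (a : WithBot ℤ) := by
    rw [← h, ← maxdeg_eq_md, maxdeg]
    exact Finset.le_max hx
  exact_mod_cast this

lemma coeff_top {p q : LaurentPolynomial ℤ} {a b : ℤ} (hp : md p = (a : WithBot ℤ))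
    (hq : md q = (b : WithBot ℤ)) : (p * q).coeff (a + b) = p.coeff a * q.coeff b := by
  classical
  rw [AddMonoidAlgebra.coeff_mul]
  simp_rw [Finsupp.sum]
  rw [Finset.sum_eq_single a]
  · rw [Finset.sum_eq_single b]
    · rw [if_pos rfl]
    · intro y hy hne
      have : y < b := lt_of_le_of_ne (le_of_mem_support hq hy) hne
      rw [if_neg (by omega)]
    · intro hb
      rw [if_pos rfl, Finsupp.notMem_support_iff.mp hb, mul_zero]
  · intro x hx hne
    have hxa : x < a := lt_of_le_of_ne (le_of_mem_support hp hx) hne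
    refine Finset.sum_eq_zero fun y hy => ?_
    have : y ≤ b := le_of_mem_support hq hy
    rw [if_neg (by omega)]
  · intro ha
    refine Finset.sum_eq_zero fun y _ => ?_
    rw [Finsupp.notMem_support_iff.mp ha, zero_mul]
    simp

lemma mem_support_of_md {p : LaurentPolynomial ℤ} {a : ℤ} (hp : md p = (a : WithBot ℤ)) :
    a ∈ p.coeff.support := by
  have hp' : p.coeff.support.max = (a : WithBot ℤ) := by
    rw [← maxdeg_eq_md] at hp; exact hp
  exact Finset.mem_of_max hp'

lemma md_mul' {p q : LaurentPolynomial ℤ} {a b : ℤ} (hp : md p = (a : WithBot ℤ))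
    (hq : md q = (b : WithBot ℤ)) : md (p * q) = ((a + b : ℤ) : WithBot ℤ) := by
  have hpa : p.coeff a ≠ 0 := Finsupp.mem_support_iff.mp (mem_support_of_md hp)
  have hqb : q.coeff b ≠ 0 := Finsupp.mem_support_iff.mp (mem_support_of_md hq)
  have hmem : (a + b) ∈ (p * q).coeff.support := by
    rw [Finsupp.mem_support_iff, coeff_top hp hq]
    exact mul_ne_zero hpa hqb
  rw [← maxdeg_eq_md, maxdeg]
  apply le_antisymm
  · apply Finset.max_le
    intro x hx
    obtain ⟨u, hu, v, hv, rfl⟩ := Finset.mem_add.mp (AddMonoidAlgebra.support_coeff_mul_subset p q hx)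
    have h1 := le_of_mem_support hp hu
    have h2 := le_of_mem_support hq hv
    exact_mod_cast add_le_add h1 h2
  · exact Finset.le_max hmem

lemma md_add_eq_left {p q : LaurentPolynomial ℤ} (h : md q < md p) : md (p + q) = md p :=
  supDegree_add_eq_left h

lemma md_Q3 : md Q3 = ((9 : ℤ) : WithBot ℤ) := by
  have hQ : Q3 = T 9 + (-(T 7 + T 7) + T 5 + -(T 3 + T 3) + -(T 1 + T 1) + -(T (-1) + T (-1))
      + -(T (-3) + T (-3)) + T (-5) + -(T (-7) + T (-7)) + T (-9)) := by
    rw [Q3]; ring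
  have hrest : md (-(T 7 + T 7) + T 5 + -(T 3 + T 3) + -(T 1 + T 1) + -(T (-1) + T (-1))
      + -(T (-3) + T (-3)) + T (-5) + -(T (-7) + T (-7)) + T (-9) : LaurentPolynomial ℤ)
      ≤ ((7 : ℤ) : WithBot ℤ) :=
    md_add_le' (md_add_le' (md_add_le' (md_add_le' (md_add_le' (md_add_le' (md_add_le'
      (md_add_le'
        (md_neg_le (md_add_le' (md_T_le (by norm_num)) (md_T_le (by norm_num))))
        (md_T_le (by norm_num)))
      (md_neg_le (md_add_le' (md_T_le (by norm_num)) (md_T_le (by norm_num)))))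
      (md_neg_le (md_add_le' (md_T_le (by norm_num)) (md_T_le (by norm_num)))))
      (md_neg_le (md_add_le' (md_T_le (by norm_num)) (md_T_le (by norm_num)))))
      (md_neg_le (md_add_le' (md_T_le (by norm_num)) (md_T_le (by norm_num)))))
      (md_T_le (by norm_num)))
      (md_neg_le (md_add_le' (md_T_le (by norm_num)) (md_T_le (by norm_num)))))
      (md_T_le (by norm_num))
  rw [hQ, md_add_eq_left, md_T]
  rw [md_T]
  exact lt_of_le_of_lt hrest (by exact_mod_cast (by norm_num : (7:ℤ) < 9))

lemma md_P : md (T 5 - T 3 - T (-3) + T (-5) : LaurentPolynomial ℤ) = ((5 : ℤ) : WithBot ℤ) := by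
  have h : (T 5 - T 3 - T (-3) + T (-5) : LaurentPolynomial ℤ)
      = T 5 + (-T 3 + -T (-3) + T (-5)) := by ring
  have hrest : md (-T 3 + -T (-3) + T (-5) : LaurentPolynomial ℤ) ≤ ((3 : ℤ) : WithBot ℤ) :=
    md_add_le' (md_add_le' (md_neg_le (md_T_le (by norm_num)))
      (md_neg_le (md_T_le (by norm_num)))) (md_T_le (by norm_num))
  rw [h, md_add_eq_left, md_T]
  rw [md_T]
  exact lt_of_le_of_lt hrest (by exact_mod_cast (by norm_num : (3:ℤ) < 5))

lemma md_S : md (T 4 - 2 * T 2 + 3 - 2 * T (-2) + T (-4) : LaurentPolynomial ℤ)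
    = ((4 : ℤ) : WithBot ℤ) := by
  have h : (T 4 - 2 * T 2 + 3 - 2 * T (-2) + T (-4) : LaurentPolynomial ℤ)
      = T 4 + (-(T 2 + T 2) + (T 0 + T 0 + T 0) + -(T (-2) + T (-2)) + T (-4)) := by
    rw [T_zero]; ring
  have hrest : md (-(T 2 + T 2) + (T 0 + T 0 + T 0) + -(T (-2) + T (-2)) + T (-4)
      : LaurentPolynomial ℤ) ≤ ((2 : ℤ) : WithBot ℤ) :=
    md_add_le' (md_add_le' (md_add_le'
      (md_neg_le (md_add_le' (md_T_le (by norm_num)) (md_T_le (by norm_num))))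
      (md_add_le' (md_add_le' (md_T_le (by norm_num)) (md_T_le (by norm_num)))
        (md_T_le (by norm_num))))
      (md_neg_le (md_add_le' (md_T_le (by norm_num)) (md_T_le (by norm_num)))))
      (md_T_le (by norm_num))
  rw [h, md_add_eq_left, md_T]
  rw [md_T]
  exact lt_of_le_of_lt hrest (by exact_mod_cast (by norm_num : (2:ℤ) < 4))

lemma md_U : md U = ((1 : ℤ) : WithBot ℤ) := by
  have h : U = -T 1 + -T (-1) := by rw [U]; ring
  rw [h, md_add_eq_left]
  · rw [md_neg, md_T]
  · rw [md_neg, md_T, md_neg, md_T]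
    exact_mod_cast (by norm_num : (-1:ℤ) < 1)

lemma md_U_pow (k : ℕ) : md (U ^ k) = ((k : ℤ) : WithBot ℤ) := by
  induction k with
  | zero =>
    have : md (1 : LaurentPolynomial ℤ) = ((0:ℤ) : WithBot ℤ) := by rw [← T_zero]; exact md_T 0
    simpa using this
  | succ n ih =>
    rw [pow_succ, md_mul' ih md_U]
    norm_cast

end VAux

open VAux in
/-- For every `m ≥ 3`, `maxdeg (V m) > m`, hence `V m` differs from the Jones
polynomial of the `m`-component unlink. -/
theorem V_ne_unlink (V : ℕ → LaurentPolynomial ℤ) (hV3 : V 3 = Q3)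
    (hVrec : ∀ m : ℕ, 3 ≤ m → V (m + 1) =
      V m * (T 5 - T 3 - T (-3) + T (-5)) +
        U ^ (m + 1) * (T 4 - 2 * T 2 + 3 - 2 * T (-2) + T (-4))) :
    ∀ m : ℕ, 3 ≤ m → (((m : ℤ) : WithBot ℤ) < maxdeg (V m)) ∧ V m ≠ U ^ m := by
  have key : ∀ m : ℕ, 3 ≤ m → ((m : ℤ) : WithBot ℤ) < md (V m) := by
    intro m hm
    induction m, hm using Nat.le_induction with
    | base =>
      rw [hV3, md_Q3]
      exact_mod_cast (by norm_num : (3:ℤ) < 9)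
    | succ n hn ih =>
      have hVn : V n ≠ 0 := by
        intro h0
        rw [h0] at ih
        simp [md, AddMonoidAlgebra.supDegree_zero] at ih
      obtain ⟨d, hd⟩ : ∃ d : ℤ, md (V n) = (d : WithBot ℤ) := by
        obtain ⟨d, hd⟩ := Finset.max_of_nonempty (Finsupp.support_nonempty_iff.mpr (mt AddMonoidAlgebra.coeff_eq_zero.mp hVn))
        exact ⟨d, by rw [← maxdeg_eq_md, maxdeg]; exact hd⟩
      have hdn : (n : ℤ) < d := by rw [hd] at ih; exact_mod_cast ih
      rw [hVrec n hn]
      have h1 : md (V n * (T 5 - T 3 - T (-3) + T (-5))) = ((d + 5 : ℤ) : WithBot ℤ) :=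
        md_mul' hd md_P
      have h2 : md (U ^ (n + 1) * (T 4 - 2 * T 2 + 3 - 2 * T (-2) + T (-4)))
          = ((((n : ℤ) + 1) + 4 : ℤ) : WithBot ℤ) := by
        rw [md_mul' (md_U_pow (n + 1)) md_S]
        norm_cast
      rw [md_add_eq_left (by rw [h1, h2]; exact_mod_cast (by omega : ((n:ℤ) + 1) + 4 < d + 5)), h1]
      exact_mod_cast (by omega : (((n : ℕ) + 1 : ℕ) : ℤ) < d + 5)
  intro m hm
  refine ⟨by rw [maxdeg_eq_md]; exact key m hm, fun hcontra => ?_⟩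
  have h := key m hm
  rw [hcontra, md_U_pow] at h
  exact absurd h (lt_irrefl _)
end

section
/- For every m ≥ 3, the Laurent polynomial V m is nonzero and mindeg (V m) = 6 - 5m. (In particular mindeg (V 3) = -9, and the lowest-degree term of V m comes from the term V (m-1)·(z^5 - z^3 - z⁻³ + z⁻⁵) in the recurrence.) -/
open LaurentPolynomial

/-- `p` has trailing exponent `a`. -/
def HasMin (p : LaurentPolynomial ℤ) (a : ℤ) : Prop :=
  p.coeff a ≠ 0 ∧ ∀ n : ℤ, n < a → p.coeff n = 0

lemma LP.sub_apply (p q : LaurentPolynomial ℤ) (n : ℤ) : (p - q).coeff n = p.coeff n - q.coeff n := rfl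

lemma LP.add_apply (p q : LaurentPolynomial ℤ) (n : ℤ) : (p + q).coeff n = p.coeff n + q.coeff n := rfl

lemma LP.neg_apply (p : LaurentPolynomial ℤ) (n : ℤ) : (-p).coeff n = -(p.coeff n) := rfl

lemma LP.T_apply (m n : ℤ) : (T n : LaurentPolynomial ℤ).coeff m = if n = m then 1 else 0 :=
  LaurentPolynomial.T_apply m n

lemma LP.two_T_apply (m n : ℤ) :
    (2 * T n : LaurentPolynomial ℤ).coeff m = if n = m then 2 else 0 := by
  rw [show (2 : LaurentPolynomial ℤ) = C 2 by simp [map_ofNat], ← single_eq_C_mul_T]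
  exact Finsupp.single_apply

lemma LP.three_apply (m : ℤ) :
    (3 : LaurentPolynomial ℤ).coeff m = if (0 : ℤ) = m then 3 else 0 := by
  rw [show (3 : LaurentPolynomial ℤ) = C 3 by simp [map_ofNat], ← single_eq_C]
  exact Finsupp.single_apply

lemma LP.one_apply (m : ℤ) :
    (1 : LaurentPolynomial ℤ).coeff m = if (0 : ℤ) = m then 1 else 0 := by
  rw [← LaurentPolynomial.single_zero_one_eq_one]
  exact Finsupp.single_apply

lemma HasMin.ne_zero {p : LaurentPolynomial ℤ} {a : ℤ} (h : HasMin p a) : p ≠ 0 := by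
  intro h0
  exact h.1 (by simp [h0])

lemma HasMin.mindeg_eq {p : LaurentPolynomial ℤ} {a : ℤ} (h : HasMin p a) :
    mindeg p = (a : WithTop ℤ) := by
  have hmem : a ∈ p.coeff.support := Finsupp.mem_support_iff.2 h.1
  apply le_antisymm
  · exact Finset.min_le hmem
  · apply Finset.le_min
    intro b hb
    have : a ≤ b := by
      by_contra hc
      exact (Finsupp.mem_support_iff.1 hb) (h.2 b (by omega))
    exact_mod_cast this

lemma coeff_mul_low {p q : LaurentPolynomial ℤ} {a b : ℤ}
    (hp : ∀ n : ℤ, n < a → p.coeff n = 0) (hq : ∀ n : ℤ, n < b → q.coeff n = 0) :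
    (∀ x : ℤ, x < a + b → (p * q).coeff x = 0) ∧ (p * q).coeff (a + b) = p.coeff a * q.coeff b := by
  classical
  have key : ∀ x : ℤ, (p * q).coeff x =
      ∑ a₁ ∈ p.coeff.support, ∑ a₂ ∈ q.coeff.support, if a₁ + a₂ = x then p.coeff a₁ * q.coeff a₂ else 0 := by
    intro x
    rw [AddMonoidAlgebra.coeff_mul]
    rfl
  have hsupp_p : ∀ n ∈ p.coeff.support, a ≤ n := by
    intro n hn
    by_contra hc
    exact (Finsupp.mem_support_iff.1 hn) (hp n (by omega))
  have hsupp_q : ∀ n ∈ q.coeff.support, b ≤ n := by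
    intro n hn
    by_contra hc
    exact (Finsupp.mem_support_iff.1 hn) (hq n (by omega))
  constructor
  · intro x hx
    rw [key]
    apply Finset.sum_eq_zero
    intro a₁ ha₁
    apply Finset.sum_eq_zero
    intro a₂ ha₂
    have := hsupp_p a₁ ha₁
    have := hsupp_q a₂ ha₂
    rw [if_neg (by omega)]
  · rw [key]
    rw [Finset.sum_eq_single a]
    · rw [Finset.sum_eq_single b]
      · rw [if_pos rfl]
      · intro a₂ ha₂ hne
        have := hsupp_q a₂ ha₂
        rw [if_neg (by omega)]
      · intro hb
        rw [if_pos rfl, Finsupp.notMem_support_iff.1 hb, mul_zero]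
    · intro a₁ ha₁ hne
      apply Finset.sum_eq_zero
      intro a₂ ha₂
      have := hsupp_p a₁ ha₁
      have := hsupp_q a₂ ha₂
      rw [if_neg (by omega)]
    · intro ha
      apply Finset.sum_eq_zero
      intro a₂ _
      rw [Finsupp.notMem_support_iff.1 ha, zero_mul]
      simp

lemma HasMin.mul {p q : LaurentPolynomial ℤ} {a b : ℤ}
    (hp : HasMin p a) (hq : HasMin q b) : HasMin (p * q) (a + b) := by
  obtain ⟨hlow, hcoeff⟩ := coeff_mul_low hp.2 hq.2
  exact ⟨by rw [hcoeff]; exact mul_ne_zero hp.1 hq.1, hlow⟩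

lemma HasMin.add {p q : LaurentPolynomial ℤ} {a b : ℤ}
    (hp : HasMin p a) (hq : HasMin q b) (hab : a < b) : HasMin (p + q) a := by
  constructor
  · rw [LP.add_apply, hq.2 a hab, add_zero]
    exact hp.1
  · intro n hn
    rw [LP.add_apply, hp.2 n hn, hq.2 n (by omega), add_zero]

set_option maxHeartbeats 1600000 in
lemma hasMin_Q3 : HasMin Q3 (-9) := by
  constructor
  · show Q3.coeff (-9) ≠ 0
    simp only [Q3, LP.sub_apply, LP.add_apply, LP.T_apply, LP.two_T_apply]
    norm_num
  · intro n hn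
    simp only [Q3, LP.sub_apply, LP.add_apply, LP.T_apply, LP.two_T_apply]
    split_ifs <;> omega

lemma hasMin_F : HasMin (T 5 - T 3 - T (-3) + T (-5) : LaurentPolynomial ℤ) (-5) := by
  constructor
  · simp only [LP.sub_apply, LP.add_apply, LP.T_apply]
    norm_num
  · intro n hn
    simp only [LP.sub_apply, LP.add_apply, LP.T_apply]
    split_ifs <;> omega

set_option maxHeartbeats 800000 in
lemma hasMin_G :
    HasMin (T 4 - 2 * T 2 + 3 - 2 * T (-2) + T (-4) : LaurentPolynomial ℤ) (-4) := by
  constructor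
  · simp only [LP.sub_apply, LP.add_apply, LP.T_apply, LP.two_T_apply, LP.three_apply]
    norm_num
  · intro n hn
    simp only [LP.sub_apply, LP.add_apply, LP.T_apply, LP.two_T_apply, LP.three_apply]
    split_ifs <;> omega

lemma hasMin_U : HasMin U (-1) := by
  constructor
  · show U.coeff (-1) ≠ 0
    simp only [U, LP.sub_apply, LP.neg_apply, LP.T_apply]
    norm_num
  · intro n hn
    simp only [U, LP.sub_apply, LP.neg_apply, LP.T_apply]
    split_ifs <;> omega

lemma hasMin_one : HasMin 1 0 := by
  constructor
  · show (1 : LaurentPolynomial ℤ).coeff 0 ≠ 0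
    simp [LP.one_apply]
  · intro n hn
    rw [LP.one_apply, if_neg (by omega)]

lemma hasMin_U_pow (k : ℕ) : HasMin (U ^ k) (-(k : ℤ)) := by
  induction k with
  | zero => simpa using hasMin_one
  | succ n ih =>
    have h := ih.mul hasMin_U
    rw [← pow_succ] at h
    have he : (-(n : ℤ)) + (-1) = -((n + 1 : ℕ) : ℤ) := by push_cast; ring
    rwa [he] at h

/-- For every `m ≥ 3`, `V m` is nonzero and has lowest degree `6 - 5 * m` in `z`. -/
theorem mindeg_V (V : ℕ → LaurentPolynomial ℤ) (hV3 : V 3 = Q3)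
    (hVrec : ∀ m : ℕ, 3 ≤ m → V (m + 1) =
      V m * (T 5 - T 3 - T (-3) + T (-5)) +
        U ^ (m + 1) * (T 4 - 2 * T 2 + 3 - 2 * T (-2) + T (-4))) :
    ∀ m : ℕ, 3 ≤ m → V m ≠ 0 ∧ mindeg (V m) = ((6 - 5 * (m : ℤ) : ℤ) : WithTop ℤ) := by
  have key : ∀ m : ℕ, 3 ≤ m → HasMin (V m) (6 - 5 * (m : ℤ)) := by
    intro m hm
    induction m with
    | zero => omega
    | succ n ih =>
      rcases Nat.lt_or_ge n 3 with h3 | h3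
      · interval_cases n
        · omega
        · omega
        · rw [show ((2 : ℕ) + 1) = 3 from rfl, hV3]
          have h9 : (6 - 5 * ((3 : ℕ) : ℤ)) = -9 := by norm_num
          rw [h9]
          exact hasMin_Q3
      · have hVn := ih h3
        have h1 : HasMin (V n * (T 5 - T 3 - T (-3) + T (-5))) (6 - 5 * (n : ℤ) + (-5)) :=
          hVn.mul hasMin_F
        have h2 : HasMin (U ^ (n + 1) * (T 4 - 2 * T 2 + 3 - 2 * T (-2) + T (-4)))
            (-((n + 1 : ℕ) : ℤ) + (-4)) := (hasMin_U_pow (n + 1)).mul hasMin_G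
        have h12 := h1.add h2 (by push_cast; omega)
        rw [hVrec n h3]
        have he : 6 - 5 * (n : ℤ) + (-5) = 6 - 5 * ((n + 1 : ℕ) : ℤ) := by push_cast; ring
        rwa [he] at h12
  intro m hm
  exact ⟨(key m hm).ne_zero, (key m hm).mindeg_eq⟩
end

section
/- Let p ∈ R = LaurentPolynomial ℤ be nonzero. If mindeg p < -8 then Φ p is nonzero and mindeg (Φ p) = mindeg p - 4; and if mindeg p > -8 then Φ p is nonzero and mindeg (Φ p) = -12. (This is the paper's lowest-degree analysis of the skein operator: deg_L(Φ(p)) = min{deg_L(p) - 2, -6} in the variable t.) -/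
open LaurentPolynomial

/-- The skein operator encoding the relation between Jones polynomials of
successive Whitehead doubles of `B₃`. -/
noncomputable def Phi (p : LaurentPolynomial ℤ) : LaurentPolynomial ℤ :=
  T (-4) * p + (T (-3) - T (-1)) * Q3

/-! ### Auxiliary coefficient API -/

noncomputable def cf (p : LaurentPolynomial ℤ) : ℤ →₀ ℤ := p.coeff

lemma cf_add (p q : LaurentPolynomial ℤ) : cf (p + q) = cf p + cf q := rfl
lemma cf_sub (p q : LaurentPolynomial ℤ) : cf (p - q) = cf p - cf q := rfl
lemma cf_T (n : ℤ) : cf (T n) = Finsupp.single n 1 := rfl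

lemma two_T (n : ℤ) :
    (2 : LaurentPolynomial ℤ) * T n = (AddMonoidAlgebra.single n 2 : LaurentPolynomial ℤ) := by
  rw [show (AddMonoidAlgebra.single n 2 : LaurentPolynomial ℤ) = C 2 * T n from
    single_eq_C_mul_T 2 n, map_ofNat]

lemma cf_two_T (n : ℤ) : cf (2 * T n) = Finsupp.single n 2 :=
  congrArg cf (two_T n)

lemma Q3_apply (m : ℤ) : cf Q3 m =
    (if (9:ℤ) = m then 1 else 0) - (if (7:ℤ) = m then 2 else 0)
    + (if (5:ℤ) = m then 1 else 0) - (if (3:ℤ) = m then 2 else 0)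
    - (if (1:ℤ) = m then 2 else 0) - (if (-1:ℤ) = m then 2 else 0)
    - (if (-3:ℤ) = m then 2 else 0) + (if (-5:ℤ) = m then 1 else 0)
    - (if (-7:ℤ) = m then 2 else 0) + (if (-9:ℤ) = m then 1 else 0) := by
  simp only [Q3, cf_sub, cf_add, cf_two_T, cf_T, Finsupp.sub_apply, Finsupp.add_apply,
    Finsupp.single_apply]

lemma Q3_low {m : ℤ} (h : m < -9) : cf Q3 m = 0 := by
  rw [Q3_apply, if_neg (by omega), if_neg (by omega), if_neg (by omega), if_neg (by omega),
    if_neg (by omega), if_neg (by omega), if_neg (by omega), if_neg (by omega),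
    if_neg (by omega), if_neg (by omega)]
  norm_num

lemma Q3_m9 : cf Q3 (-9) = 1 := by
  rw [Q3_apply, if_neg (by omega), if_neg (by omega), if_neg (by omega), if_neg (by omega),
    if_neg (by omega), if_neg (by omega), if_neg (by omega), if_neg (by omega),
    if_neg (by omega), if_pos rfl]
  norm_num

lemma cf_T_mul (k : ℤ) (p : LaurentPolynomial ℤ) (n : ℤ) :
    cf (T k * p) n = cf p (n - k) := by
  have h := AddMonoidAlgebra.coeff_single_mul_apply p (1:ℤ) k n
  rw [one_mul] at h
  have hnk : n - k = -k + n := by omega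
  rw [hnk]
  exact h

lemma cf_Phi (p : LaurentPolynomial ℤ) (m : ℤ) :
    cf (Phi p) m = cf p (m + 4) + (cf Q3 (m + 3) - cf Q3 (m + 1)) := by
  rw [Phi, sub_mul, cf_add, Finsupp.add_apply, cf_sub, Finsupp.sub_apply,
    cf_T_mul, cf_T_mul, cf_T_mul, sub_neg_eq_add, sub_neg_eq_add, sub_neg_eq_add]

lemma ne_zero_of_cf {p : LaurentPolynomial ℤ} {n : ℤ} (h : cf p n ≠ 0) : p ≠ 0 := by
  intro hz
  apply h
  rw [show cf p = cf 0 from congrArg cf hz]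
  simp [cf]

lemma mindeg_eq {p : LaurentPolynomial ℤ} {n : ℤ} (h1 : cf p n ≠ 0)
    (h2 : ∀ m, m < n → cf p m = 0) : mindeg p = (n : WithTop ℤ) := by
  unfold mindeg
  apply le_antisymm
  · exact Finset.min_le (Finsupp.mem_support_iff.mpr h1)
  · apply Finset.le_min
    intro m hm
    have hmne : cf p m ≠ 0 := Finsupp.mem_support_iff.mp hm
    by_contra hcon
    push_neg at hcon
    exact hmne (h2 m (by exact_mod_cast hcon))

lemma exists_mindeg {p : LaurentPolynomial ℤ} (hp : p ≠ 0) :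
    ∃ n : ℤ, mindeg p = (n : WithTop ℤ) ∧ cf p n ≠ 0 ∧ ∀ m, m < n → cf p m = 0 := by
  have hne : (cf p).support.Nonempty := by
    rw [Finsupp.support_nonempty_iff]
    intro h
    exact hp (AddMonoidAlgebra.coeff_eq_zero.mp h)
  obtain ⟨n, hn⟩ := Finset.min_of_nonempty hne
  refine ⟨n, (by unfold mindeg; exact hn), Finsupp.mem_support_iff.mp (Finset.mem_of_min hn), ?_⟩
  intro m hm
  by_contra hmne
  have : (n : WithTop ℤ) ≤ (m : WithTop ℤ) :=
    hn ▸ Finset.min_le (Finsupp.mem_support_iff.mpr hmne)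
  exact absurd (by exact_mod_cast this : n ≤ m) (not_le.mpr hm)

/-- Lowest-degree analysis of the skein operator `Φ`. -/
theorem mindeg_Phi (p : LaurentPolynomial ℤ) (hp : p ≠ 0) :
    (mindeg p < ((-8 : ℤ) : WithTop ℤ) →
      Phi p ≠ 0 ∧ mindeg (Phi p) = mindeg p + ((-4 : ℤ) : WithTop ℤ)) ∧
    (((-8 : ℤ) : WithTop ℤ) < mindeg p →
      Phi p ≠ 0 ∧ mindeg (Phi p) = ((-12 : ℤ) : WithTop ℤ)) := by
  obtain ⟨n, hmin, h1, h2⟩ := exists_mindeg hp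
  constructor
  · intro hlt
    rw [hmin] at hlt ⊢
    have hn : n < -8 := by exact_mod_cast hlt
    have hkey : cf (Phi p) (n - 4) = cf p n := by
      rw [cf_Phi, Q3_low (by omega), Q3_low (by omega), show n - 4 + 4 = n by ring]
      ring
    have hne : cf (Phi p) (n - 4) ≠ 0 := by rw [hkey]; exact h1
    refine ⟨ne_zero_of_cf hne, ?_⟩
    rw [show (n : WithTop ℤ) + ((-4 : ℤ) : WithTop ℤ) = ((n - 4 : ℤ) : WithTop ℤ) by
      rw [← WithTop.coe_add]; norm_num; rfl]
    apply mindeg_eq hne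
    intro m hm
    rw [cf_Phi, Q3_low (by omega), Q3_low (by omega), h2 (m + 4) (by omega)]
    ring
  · intro hlt
    rw [hmin] at hlt
    have hn : -8 < n := by exact_mod_cast hlt
    have hkey : cf (Phi p) (-12) = 1 := by
      rw [cf_Phi, h2 (-12 + 4) (by omega), show (-12 : ℤ) + 3 = -9 by ring, Q3_m9,
        Q3_low (by omega)]
      ring
    have hne : cf (Phi p) (-12) ≠ 0 := by rw [hkey]; exact one_ne_zero
    refine ⟨ne_zero_of_cf hne, ?_⟩
    apply mindeg_eq hne
    intro m hm
    rw [cf_Phi, Q3_low (by omega), Q3_low (by omega), h2 (m + 4) (by omega)]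
    ring
end

section
/- For every k ≥ 0, the Laurent polynomial W' k is nonzero and mindeg (W' k) = -4k - 10. (Equivalently, in the variable t = z², deg_L(V(W_n(B₃))) = -n - 4 for every odd n ≥ 1.) -/
open LaurentPolynomial

lemma lp_add_apply (p q : LaurentPolynomial ℤ) (m : ℤ) : (p + q).coeff m = p.coeff m + q.coeff m := rfl

lemma lp_sub_apply (p q : LaurentPolynomial ℤ) (m : ℤ) : (p - q).coeff m = p.coeff m - q.coeff m := rfl

lemma lp_neg_apply (p : LaurentPolynomial ℤ) (m : ℤ) : (-p).coeff m = -(p.coeff m) := rfl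

lemma lp_one_apply (m : ℤ) : (1 : LaurentPolynomial ℤ).coeff m = if 0 = m then 1 else 0 := by
  exact T_apply (R := ℤ) m 0

lemma T_mul_apply (n : ℤ) (p : LaurentPolynomial ℤ) (m : ℤ) :
    (T n * p : LaurentPolynomial ℤ).coeff m = p.coeff (-n + m) := by
  simpa using AddMonoidAlgebra.coeff_single_mul_apply p (1 : ℤ) n m

lemma mindeg_eq_of {p : LaurentPolynomial ℤ} {n : ℤ} (h1 : p.coeff n ≠ 0)
    (h2 : ∀ m, m < n → p.coeff m = 0) : mindeg p = (n : WithTop ℤ) := by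
  apply le_antisymm
  · exact Finset.min_le (Finsupp.mem_support_iff.mpr h1)
  · apply Finset.le_min
    intro m hm
    rcases lt_or_ge m n with h | h
    · exact absurd (h2 m h) (Finsupp.mem_support_iff.mp hm)
    · exact_mod_cast h

lemma Q3_low_s7 (j : ℤ) (hj : j < -9) : Q3.coeff j = 0 := by
  rw [Q3]
  simp only [two_mul, lp_add_apply, lp_sub_apply, lp_neg_apply, T_apply]
  rw [if_neg (show ¬(9:ℤ) = j by omega), if_neg (show ¬(7:ℤ) = j by omega),
    if_neg (show ¬(5:ℤ) = j by omega), if_neg (show ¬(3:ℤ) = j by omega),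
    if_neg (show ¬(1:ℤ) = j by omega), if_neg (show ¬(-1:ℤ) = j by omega),
    if_neg (show ¬(-3:ℤ) = j by omega), if_neg (show ¬(-5:ℤ) = j by omega),
    if_neg (show ¬(-7:ℤ) = j by omega), if_neg (show ¬(-9:ℤ) = j by omega)]
  norm_num

/-- The Jones polynomials of the Whitehead odd doubles `W_{2k+1}(B₃)` have
lowest degree `-4k - 10` in `z`. -/
theorem mindeg_W_odd (W' : ℕ → LaurentPolynomial ℤ)
    (hW'0 : W' 0 = -T 8 + 2 * T 6 - T 4 + 2 * T 2 + 1 + T (-4) - T (-6)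
      + 2 * T (-8) - T (-10))
    (hW'rec : ∀ k : ℕ, W' (k + 1) = Phi (W' k)) :
    ∀ k : ℕ, W' k ≠ 0 ∧ mindeg (W' k) = ((-4 * (k : ℤ) - 10 : ℤ) : WithTop ℤ) := by
  have key : ∀ k : ℕ, (W' k).coeff (-4 * (k : ℤ) - 10) = -1 ∧
      ∀ m : ℤ, m < -4 * (k : ℤ) - 10 → (W' k).coeff m = 0 := by
    intro k
    induction k with
    | zero =>
      rw [hW'0]
      constructor
      · norm_num [two_mul, lp_add_apply, lp_sub_apply, lp_neg_apply, lp_one_apply, T_apply]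
      · intro m hm
        norm_num at hm
        simp only [two_mul, lp_add_apply, lp_sub_apply, lp_neg_apply, lp_one_apply, T_apply]
        rw [if_neg (show ¬(8:ℤ) = m by omega), if_neg (show ¬(6:ℤ) = m by omega),
          if_neg (show ¬(4:ℤ) = m by omega), if_neg (show ¬(2:ℤ) = m by omega),
          if_neg (show ¬(0:ℤ) = m by omega), if_neg (show ¬(-4:ℤ) = m by omega),
          if_neg (show ¬(-6:ℤ) = m by omega), if_neg (show ¬(-8:ℤ) = m by omega),
          if_neg (show ¬(-10:ℤ) = m by omega)]
        norm_num
    | succ k ih =>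
      have hQc : ∀ m : ℤ, m < -12 → ((T (-3) - T (-1)) * Q3 : LaurentPolynomial ℤ).coeff m = 0 := by
        intro m hm
        have he : ((T (-3) - T (-1)) * Q3 : LaurentPolynomial ℤ) = T (-3) * Q3 - T (-1) * Q3 := by
          ring
        rw [he, lp_sub_apply, T_mul_apply, T_mul_apply,
          Q3_low_s7 _ (by omega), Q3_low_s7 _ (by omega), sub_zero]
      have hco : ∀ m : ℤ, (W' (k + 1)).coeff m
          = (W' k).coeff (4 + m) + ((T (-3) - T (-1)) * Q3 : LaurentPolynomial ℤ).coeff m := by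
        intro m
        rw [hW'rec k, Phi, lp_add_apply, T_mul_apply]
        norm_num
      constructor
      · rw [hco]
        push_cast
        rw [show (4 + (-4 * ((k : ℤ) + 1) - 10)) = -4 * (k : ℤ) - 10 by ring]
        rw [ih.1, hQc _ (by omega)]
        ring
      · intro m hm
        push_cast at hm
        rw [hco, ih.2 _ (by omega), hQc _ (by omega), add_zero]
  intro k
  obtain ⟨h1, h2⟩ := key k
  refine ⟨fun h => by simp [h] at h1, mindeg_eq_of (by rw [h1]; norm_num) h2⟩
end

section
/- The Laurent polynomials W k (for k ≥ 1) and W' l (for l ≥ 0) are pairwise distinct: W k ≠ W l for k ≠ l with k, l ≥ 1; W' k ≠ W' l for k ≠ l with k, l ≥ 0; W k ≠ W' l for all k ≥ 1 and l ≥ 0; moreover W k ≠ U² for every k ≥ 1 and W' l ≠ U² for every l ≥ 0, where U := -z - z⁻¹. (Hence the links W_n(B₃), n ≥ 1, are pairwise non-isotopic and none is isotopic to the 3-component unlink.) -/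
open LaurentPolynomial

/-- Evaluation of the coefficient at exponent `m`, as an additive hom. -/
noncomputable def ev (m : ℤ) : LaurentPolynomial ℤ →+ ℤ :=
  (Finsupp.applyAddHom m).comp AddMonoidAlgebra.coeffAddEquiv.toAddMonoidHom

lemma ev_T (m n : ℤ) : ev m (T n) = if n = m then 1 else 0 := by exact T_apply m n

lemma ev_T_mul (n m : ℤ) (p : LaurentPolynomial ℤ) :
    ev m (T n * p) = ev (m - n) p := by
  have := AddMonoidAlgebra.coeff_single_mul_apply (R := ℤ) (G := ℤ) p 1 n m
  rw [one_mul] at this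
  show (T n * p : LaurentPolynomial ℤ).coeff m = p.coeff (m - n)
  rw [show m - n = -n + m by ring]
  exact this

set_option maxHeartbeats 1000000 in
lemma ev_Q3_low {m : ℤ} (hm : m < -9) : ev m Q3 = 0 := by
  simp only [Q3, map_add, map_sub, two_mul, ev_T]
  split_ifs <;> omega

set_option maxHeartbeats 1000000 in
lemma ev_Q3_neg9 : ev (-9) Q3 = 1 := by
  simp only [Q3, map_add, map_sub, two_mul, ev_T]
  norm_num

lemma ev_Phi (p : LaurentPolynomial ℤ) (m : ℤ) :
    ev m (Phi p) = ev (m + 4) p + (ev (m + 3) Q3 - ev (m + 1) Q3) := by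
  simp only [Phi, sub_mul, map_add, map_sub, ev_T_mul]
  norm_num

lemma U_sq : U ^ 2 = T 2 + 2 * T 0 + T (-2) := by
  have h : U ^ 2 = T 1 * T 1 + 2 * (T 1 * T (-1)) + T (-1) * T (-1) := by
    rw [U]; ring
  rw [h, ← T_add, ← T_add, ← T_add]
  norm_num

lemma ev_U_sq_low {m : ℤ} (hm : m < -2) : ev m (U ^ 2) = 0 := by
  rw [U_sq]
  simp only [map_add, two_mul, ev_T]
  split_ifs <;> omega

lemma step (p : LaurentPolynomial ℤ) (n : ℤ) (hn : n ≤ -10)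
    (h1 : ev n p ≠ 0) (h2 : ∀ m < n, ev m p = 0) :
    ev (n - 4) (Phi p) ≠ 0 ∧ ∀ m < n - 4, ev m (Phi p) = 0 := by
  constructor
  · rw [ev_Phi, show n - 4 + 4 = n by ring,
      ev_Q3_low (by omega : n - 4 + 3 < -9), ev_Q3_low (by omega : n - 4 + 1 < -9)]
    simpa using h1
  · intro m hm
    rw [ev_Phi, h2 _ (by omega), ev_Q3_low (by omega), ev_Q3_low (by omega)]
    ring

/-- The Jones polynomials of the links `W_n(B₃)`, `n ≥ 1`, are pairwise distinct
and distinct from that of the 3-component unlink. -/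
theorem jones_W_pairwise_distinct
    (W : ℕ → LaurentPolynomial ℤ) (hW0 : W 0 = U ^ 2)
    (hWrec : ∀ k : ℕ, W (k + 1) = Phi (W k))
    (W' : ℕ → LaurentPolynomial ℤ)
    (hW'0 : W' 0 = -T 8 + 2 * T 6 - T 4 + 2 * T 2 + 1 + T (-4) - T (-6)
      + 2 * T (-8) - T (-10))
    (hW'rec : ∀ k : ℕ, W' (k + 1) = Phi (W' k)) :
    (∀ k l : ℕ, 1 ≤ k → 1 ≤ l → k ≠ l → W k ≠ W l) ∧
    (∀ k l : ℕ, k ≠ l → W' k ≠ W' l) ∧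
    (∀ k l : ℕ, 1 ≤ k → W k ≠ W' l) ∧
    (∀ k : ℕ, 1 ≤ k → W k ≠ U ^ 2) ∧
    (∀ l : ℕ, W' l ≠ U ^ 2) := by
  -- low-degree invariant for W
  have hW : ∀ k : ℕ, ev (-12 - 4 * (k : ℤ)) (W (k + 1)) ≠ 0 ∧
      ∀ m < -12 - 4 * (k : ℤ), ev m (W (k + 1)) = 0 := by
    intro k
    induction k with
    | zero =>
      rw [hWrec 0, hW0]
      constructor
      · rw [show (-12 - 4 * ((0:ℕ):ℤ)) = -12 by norm_num, ev_Phi,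
          ev_U_sq_low (by omega : (-12:ℤ) + 4 < -2),
          ev_Q3_low (by omega : (-12:ℤ) + 1 < -9),
          show (-12:ℤ) + 3 = -9 by ring, ev_Q3_neg9]
        norm_num
      · intro m hm
        rw [ev_Phi, ev_U_sq_low (by push_cast at hm ⊢; omega),
          ev_Q3_low (by push_cast at hm ⊢; omega),
          ev_Q3_low (by push_cast at hm ⊢; omega)]
        ring
    | succ j ih =>
      have h := step (W (j + 1)) (-12 - 4 * (j : ℤ)) (by omega) ih.1 ih.2
      rw [← hWrec (j + 1)] at h
      constructor
      · push_cast
        rw [show (-12 - 4 * ((j:ℤ) + 1)) = -12 - 4 * (j:ℤ) - 4 by ring]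
        exact h.1
      · intro m hm
        push_cast at hm
        exact h.2 m (by omega)
  -- low-degree invariant for W'
  have hW' : ∀ l : ℕ, ev (-10 - 4 * (l : ℤ)) (W' l) ≠ 0 ∧
      ∀ m < -10 - 4 * (l : ℤ), ev m (W' l) = 0 := by
    intro l
    induction l with
    | zero =>
      rw [hW'0]
      have h1 : (1 : LaurentPolynomial ℤ) = T 0 := T_zero.symm
      constructor
      · rw [show (-10 - 4 * ((0:ℕ):ℤ)) = -10 by norm_num]
        simp only [h1, map_add, map_sub, map_neg, two_mul, ev_T]
        norm_num
      · intro m hm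
        push_cast at hm
        simp only [h1, map_add, map_sub, map_neg, two_mul, ev_T]
        split_ifs <;> omega
    | succ j ih =>
      have h := step (W' j) (-10 - 4 * (j : ℤ)) (by omega) ih.1 ih.2
      rw [← hW'rec j] at h
      constructor
      · push_cast
        rw [show (-10 - 4 * ((j:ℤ) + 1)) = -10 - 4 * (j:ℤ) - 4 by ring]
        exact h.1
      · intro m hm
        push_cast at hm
        exact h.2 m (by omega)
  -- restated invariant for W at k ≥ 1
  have hW1 : ∀ k : ℕ, 1 ≤ k → ev (-8 - 4 * (k : ℤ)) (W k) ≠ 0 ∧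
      ∀ m < -8 - 4 * (k : ℤ), ev m (W k) = 0 := by
    intro k hk
    obtain ⟨j, rfl⟩ : ∃ j, k = j + 1 := ⟨k - 1, by omega⟩
    have h := hW j
    constructor
    · push_cast
      rw [show (-8 - 4 * ((j:ℤ) + 1)) = -12 - 4 * (j:ℤ) by ring]
      exact h.1
    · intro m hm
      push_cast at hm
      exact h.2 m (by omega)
  refine ⟨?_, ?_, ?_, ?_, ?_⟩
  · intro k l hk hl hkl hEq
    rcases lt_or_gt_of_ne hkl with h | h
    · have := (hW1 l hl).1
      rw [← hEq] at this
      exact this ((hW1 k hk).2 _ (by omega))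
    · have := (hW1 k hk).1
      rw [hEq] at this
      exact this ((hW1 l hl).2 _ (by omega))
  · intro k l hkl hEq
    rcases lt_or_gt_of_ne hkl with h | h
    · have := (hW' l).1
      rw [← hEq] at this
      exact this ((hW' k).2 _ (by omega))
    · have := (hW' k).1
      rw [hEq] at this
      exact this ((hW' l).2 _ (by omega))
  · intro k l hk hEq
    rcases lt_or_ge (-8 - 4 * (k:ℤ)) (-10 - 4 * (l:ℤ)) with h | h
    · have := (hW1 k hk).1
      rw [hEq] at this
      exact this ((hW' l).2 _ h)
    · have := (hW' l).1
      rw [← hEq] at this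
      exact this ((hW1 k hk).2 _ (by omega))
  · intro k hk hEq
    have := (hW1 k hk).1
    rw [hEq] at this
    exact this (ev_U_sq_low (by omega))
  · intro l hEq
    have := (hW' l).1
    rw [hEq] at this
    exact this (ev_U_sq_low (by omega))
end

section
/- Fix m ≥ 3. For every k ≥ 1, the Laurent polynomial Wₘ k is nonzero and mindeg (Wₘ k) = 7 - 5m - 4k. (Equivalently, in the variable t = z², deg_L(V(W_n(B_m))) = (5 - 5m)/2 - (n - 1) for every even n ≥ 2.) -/
open LaurentPolynomial

namespace JonesAux

instance : CoeFun (LaurentPolynomial ℤ) (fun _ => ℤ → ℤ) := ⟨fun p => p.coeff⟩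

lemma coeff_sub (p q : LaurentPolynomial ℤ) (i : ℤ) :
    (p - q : LaurentPolynomial ℤ) i = p i - q i := Finsupp.sub_apply p.coeff q.coeff i

lemma coeff_add (p q : LaurentPolynomial ℤ) (i : ℤ) :
    (p + q : LaurentPolynomial ℤ) i = p i + q i := Finsupp.add_apply p.coeff q.coeff i

lemma coeff_neg (p : LaurentPolynomial ℤ) (i : ℤ) :
    (-p : LaurentPolynomial ℤ) i = -(p i) := Finsupp.neg_apply p.coeff i

lemma coeff_mul_T (p : LaurentPolynomial ℤ) (a i : ℤ) :
    (p * T a : LaurentPolynomial ℤ) i = p (i - a) := by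
  show (p * AddMonoidAlgebra.single a 1).coeff i = _
  rw [AddMonoidAlgebra.coeff_mul_single_apply]; simp [sub_eq_add_neg]

lemma coeff_T_mul (p : LaurentPolynomial ℤ) (a i : ℤ) :
    (T a * p : LaurentPolynomial ℤ) i = p (i - a) := by
  rw [T_mul, coeff_mul_T]

lemma coeff_T (a i : ℤ) : (T a : LaurentPolynomial ℤ) i = if a = i then 1 else 0 := by
  show (AddMonoidAlgebra.single a 1).coeff i = _
  rw [AddMonoidAlgebra.coeff_single]; exact Finsupp.single_apply

lemma coeff_nat_mul (n : ℕ) (p : LaurentPolynomial ℤ) (i : ℤ) :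
    ((n : LaurentPolynomial ℤ) * p) i = n * p i := by
  rw [← nsmul_eq_mul, AddMonoidAlgebra.coeff_smul_apply]; simp

lemma coeff_two_mul (p : LaurentPolynomial ℤ) (i : ℤ) :
    ((2 : LaurentPolynomial ℤ) * p) i = 2 * p i := by
  have h : ((2 : ℕ) : LaurentPolynomial ℤ) = 2 := by norm_num
  rw [← h, coeff_nat_mul]; norm_num

lemma coeff_three_mul (p : LaurentPolynomial ℤ) (i : ℤ) :
    ((3 : LaurentPolynomial ℤ) * p) i = 3 * p i := by
  have h : ((3 : ℕ) : LaurentPolynomial ℤ) = 3 := by norm_num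
  rw [← h, coeff_nat_mul]; norm_num

lemma coeff_one (i : ℤ) : (1 : LaurentPolynomial ℤ) i = if (0 : ℤ) = i then 1 else 0 := by
  rw [← T_zero, coeff_T]

/-- Lower bound on support: all coefficients below `n` vanish. -/
def LB (p : LaurentPolynomial ℤ) (n : ℤ) : Prop := ∀ i : ℤ, i < n → p i = 0

lemma U_pow (j : ℕ) :
    LB (U ^ j) (-(j : ℤ)) ∧ (U ^ j) (-(j : ℤ)) = (-1) ^ j := by
  induction j with
  | zero =>
    constructor
    · intro i hi
      rw [pow_zero, coeff_one, if_neg (by omega : ¬(0 : ℤ) = i)]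
    · simp [coeff_one]
  | succ j ih =>
    obtain ⟨hLB, htc⟩ := ih
    have hexp : U ^ (j + 1) = -(U ^ j * T 1) - U ^ j * T (-1) := by
      rw [pow_succ, U]; ring
    have hco : ∀ i : ℤ, (U ^ (j + 1)) i = -(U ^ j) (i - 1) - (U ^ j) (i + 1) := by
      intro i
      rw [hexp, coeff_sub, coeff_neg, coeff_mul_T, coeff_mul_T]
      norm_num
    constructor
    · intro i hi
      rw [hco i, hLB (i - 1) (by push_cast at hi ⊢; omega),
        hLB (i + 1) (by push_cast at hi ⊢; omega)]
      ring
    · rw [hco (-(↑(j + 1) : ℤ)),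
        hLB (-(↑(j + 1) : ℤ) - 1) (by push_cast; omega),
        show (-(↑(j + 1) : ℤ) + 1) = -(j : ℤ) by push_cast; ring, htc]
      ring

lemma Q3_coeff (i : ℤ) :
    Q3 i = (if (9:ℤ) = i then 1 else 0) - 2 * (if (7:ℤ) = i then 1 else 0)
      + (if (5:ℤ) = i then 1 else 0) - 2 * (if (3:ℤ) = i then 1 else 0)
      - 2 * (if (1:ℤ) = i then 1 else 0) - 2 * (if (-1:ℤ) = i then 1 else 0)
      - 2 * (if (-3:ℤ) = i then 1 else 0) + (if (-5:ℤ) = i then 1 else 0)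
      - 2 * (if (-7:ℤ) = i then 1 else 0) + (if (-9:ℤ) = i then 1 else 0) := by
  simp only [Q3, coeff_sub, coeff_add, coeff_two_mul, coeff_T]

lemma Q3_LB : LB Q3 (-9) := by
  intro i hi
  rw [Q3_coeff, if_neg (by omega : ¬(9:ℤ) = i), if_neg (by omega : ¬(7:ℤ) = i),
    if_neg (by omega : ¬(5:ℤ) = i), if_neg (by omega : ¬(3:ℤ) = i),
    if_neg (by omega : ¬(1:ℤ) = i), if_neg (by omega : ¬(-1:ℤ) = i),
    if_neg (by omega : ¬(-3:ℤ) = i), if_neg (by omega : ¬(-5:ℤ) = i),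
    if_neg (by omega : ¬(-7:ℤ) = i), if_neg (by omega : ¬(-9:ℤ) = i)]
  ring

lemma Q3_tc : Q3 (-9) = 1 := by
  rw [Q3_coeff]; norm_num

lemma coeff_q1 (p : LaurentPolynomial ℤ) (i : ℤ) :
    (p * (T 5 - T 3 - T (-3) + T (-5)) : LaurentPolynomial ℤ) i
      = p (i - 5) - p (i - 3) - p (i + 3) + p (i + 5) := by
  have h : p * (T 5 - T 3 - T (-3) + T (-5))
      = p * T 5 - p * T 3 - p * T (-3) + p * T (-5) := by ring
  rw [h, coeff_add, coeff_sub, coeff_sub,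
    coeff_mul_T, coeff_mul_T, coeff_mul_T, coeff_mul_T, sub_neg_eq_add, sub_neg_eq_add]

lemma coeff_q2 (p : LaurentPolynomial ℤ) (i : ℤ) :
    (p * (T 4 - 2 * T 2 + 3 - 2 * T (-2) + T (-4)) : LaurentPolynomial ℤ) i
      = p (i - 4) - 2 * p (i - 2) + 3 * p i - 2 * p (i + 2) + p (i + 4) := by
  have h : p * (T 4 - 2 * T 2 + 3 - 2 * T (-2) + T (-4))
      = p * T 4 - 2 * (p * T 2) + 3 * p - 2 * (p * T (-2)) + p * T (-4) := by ring
  rw [h, coeff_add, coeff_sub, coeff_add, coeff_sub,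
    coeff_mul_T, coeff_two_mul, coeff_mul_T, coeff_three_mul, coeff_two_mul,
    coeff_mul_T, coeff_mul_T, sub_neg_eq_add, sub_neg_eq_add]

end JonesAux

open JonesAux in
/-- For fixed `m ≥ 3`, the Jones polynomials of `W_{2k}(B_m)` have lowest
degree `7 - 5m - 4k` in `z`. -/
theorem mindeg_W_general (m : ℕ) (hm : 3 ≤ m)
    (V : ℕ → LaurentPolynomial ℤ) (hV3 : V 3 = Q3)
    (hVrec : ∀ j : ℕ, 3 ≤ j → V (j + 1) =
      V j * (T 5 - T 3 - T (-3) + T (-5)) +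
        U ^ (j + 1) * (T 4 - 2 * T 2 + 3 - 2 * T (-2) + T (-4)))
    (Wm : ℕ → LaurentPolynomial ℤ) (hWm0 : Wm 0 = U ^ (m - 1))
    (hWmrec : ∀ k : ℕ, Wm (k + 1) = T (-4) * Wm k + (T (-3) - T (-1)) * V m) :
    ∀ k : ℕ, 1 ≤ k →
      Wm k ≠ 0 ∧
        mindeg (Wm k) = ((7 - 5 * (m : ℤ) - 4 * (k : ℤ) : ℤ) : WithTop ℤ) := by
  -- Facts about V
  have hVfact : ∀ j : ℕ, 3 ≤ j →
      LB (V j) (6 - 5 * (j : ℤ)) ∧ (V j) (6 - 5 * (j : ℤ)) = 1 := by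
    intro j hj
    induction j, hj using Nat.le_induction with
    | base =>
      rw [hV3]
      constructor
      · intro i hi
        exact Q3_LB i (by push_cast at hi; omega)
      · rw [show (6 - 5 * ((3:ℕ) : ℤ)) = -9 by norm_num]
        exact Q3_tc
    | succ j hj ih =>
      obtain ⟨hLB, htc⟩ := ih
      obtain ⟨hULB, _⟩ := U_pow (j + 1)
      have hco : ∀ i : ℤ, (V (j + 1)) i
          = (V j) (i - 5) - (V j) (i - 3) - (V j) (i + 3) + (V j) (i + 5)
            + ((U ^ (j+1)) (i - 4) - 2 * (U ^ (j+1)) (i - 2) + 3 * (U ^ (j+1)) i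
              - 2 * (U ^ (j+1)) (i + 2) + (U ^ (j+1)) (i + 4)) := by
        intro i
        rw [hVrec j hj, coeff_add, coeff_q1, coeff_q2]
      have hjz : (3 : ℤ) ≤ (j : ℤ) := by exact_mod_cast hj
      have hzero2 : ∀ i : ℤ, i ≤ 6 - 5 * ((↑(j + 1) : ℤ)) →
          (U ^ (j+1)) (i - 4) - 2 * (U ^ (j+1)) (i - 2) + 3 * (U ^ (j+1)) i
            - 2 * (U ^ (j+1)) (i + 2) + (U ^ (j+1)) (i + 4) = 0 := by
        intro i hi
        push_cast at hi
        rw [hULB (i - 4) (by push_cast; omega), hULB (i - 2) (by push_cast; omega),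
          hULB i (by push_cast; omega), hULB (i + 2) (by push_cast; omega),
          hULB (i + 4) (by push_cast; omega)]
        ring
      constructor
      · intro i hi
        have hi' : i < 6 - 5 * ((j : ℤ) + 1) := by push_cast at hi; omega
        rw [hco i, hzero2 i (by push_cast; omega),
          hLB (i - 5) (by omega), hLB (i - 3) (by omega),
          hLB (i + 3) (by omega), hLB (i + 5) (by omega)]
        ring
      · rw [hco (6 - 5 * ((↑(j + 1) : ℤ))),
          hzero2 (6 - 5 * ((↑(j + 1) : ℤ))) le_rfl,
          hLB (6 - 5 * ((↑(j + 1) : ℤ)) - 5) (by push_cast; omega),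
          hLB (6 - 5 * ((↑(j + 1) : ℤ)) - 3) (by push_cast; omega),
          hLB (6 - 5 * ((↑(j + 1) : ℤ)) + 3) (by push_cast; omega),
          show (6 - 5 * ((↑(j + 1) : ℤ)) + 5) = 6 - 5 * (j : ℤ) by push_cast; ring,
          htc]
        ring
  obtain ⟨hVLB, hVtc⟩ := hVfact m hm
  have hmz : (3 : ℤ) ≤ (m : ℤ) := by exact_mod_cast hm
  -- coefficient formula for the W recursion
  have hWco : ∀ k : ℕ, ∀ i : ℤ, (Wm (k + 1)) i
      = (Wm k) (i + 4) + ((V m) (i + 3) - (V m) (i + 1)) := by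
    intro k i
    rw [hWmrec k, coeff_add, coeff_T_mul]
    rw [show ((T (-3) - T (-1)) * V m : LaurentPolynomial ℤ)
        = V m * T (-3) - V m * T (-1) by ring,
      coeff_sub, coeff_mul_T, coeff_mul_T]
    norm_num
  -- the invariant for W
  have hW0LB : ∀ i : ℤ, i < -((m : ℤ) - 1) → (Wm 0) i = 0 := by
    intro i hi
    obtain ⟨hULB, _⟩ := U_pow (m - 1)
    rw [hWm0]
    exact hULB i (by omega)
  have key : ∀ k : ℕ, 1 ≤ k →
      LB (Wm k) (7 - 5 * (m : ℤ) - 4 * (k : ℤ)) ∧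
        (Wm k) (7 - 5 * (m : ℤ) - 4 * (k : ℤ)) = 1 := by
    intro k hk
    induction k, hk using Nat.le_induction with
    | base =>
      constructor
      · intro i hi
        have hi' : i < 7 - 5 * (m : ℤ) - 4 := by push_cast at hi; omega
        rw [hWco 0 i, hW0LB (i + 4) (by omega),
          hVLB (i + 3) (by omega), hVLB (i + 1) (by omega)]
        ring
      · rw [hWco 0 (7 - 5 * (m : ℤ) - 4 * ((↑(1:ℕ)) : ℤ)),
          hW0LB (7 - 5 * (m : ℤ) - 4 * ((↑(1:ℕ)) : ℤ) + 4) (by push_cast; omega),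
          hVLB (7 - 5 * (m : ℤ) - 4 * ((↑(1:ℕ)) : ℤ) + 1) (by push_cast; omega),
          show (7 - 5 * (m : ℤ) - 4 * ((↑(1:ℕ)) : ℤ) + 3) = 6 - 5 * (m : ℤ)
            by push_cast; ring,
          hVtc]
        ring
    | succ k hk ih =>
      obtain ⟨hLB, htc⟩ := ih
      constructor
      · intro i hi
        have hi' : i < 7 - 5 * (m : ℤ) - 4 * ((k : ℤ) + 1) := by push_cast at hi; omega
        rw [hWco k i, hLB (i + 4) (by omega),
          hVLB (i + 3) (by omega), hVLB (i + 1) (by omega)]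
        ring
      · rw [hWco k (7 - 5 * (m : ℤ) - 4 * ((↑(k + 1)) : ℤ)),
          hVLB (7 - 5 * (m : ℤ) - 4 * ((↑(k + 1)) : ℤ) + 3) (by push_cast; omega),
          hVLB (7 - 5 * (m : ℤ) - 4 * ((↑(k + 1)) : ℤ) + 1) (by push_cast; omega),
          show (7 - 5 * (m : ℤ) - 4 * ((↑(k + 1)) : ℤ) + 4)
            = 7 - 5 * (m : ℤ) - 4 * (k : ℤ) by push_cast; ring,
          htc]
        ring
  intro k hk
  obtain ⟨hLB, htc⟩ := key k hk
  set n : ℤ := 7 - 5 * (m : ℤ) - 4 * (k : ℤ) with hn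
  have hmem : n ∈ (Wm k).coeff.support := by
    rw [Finsupp.mem_support_iff, htc]; norm_num
  refine ⟨?_, ?_⟩
  · intro h0
    rw [h0] at htc
    simp at htc
  · apply le_antisymm
    · exact Finset.min_le hmem
    · apply Finset.le_min
      intro b hb
      by_contra hlt
      push_neg at hlt
      have hbn : b < n := by exact_mod_cast hlt
      exact (Finsupp.mem_support_iff.mp hb) (hLB b hbn)
end
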